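/- Every word u over the alphabet {1,…,n} with |u| ≥ 2ⁿ contains a bad j-pair for some 1 ≤ j ≤ n. -/

import Mathlib

/-- `u` has a bad `j`-pair: two positions `k < k'` carrying letter `j` such that
all letters strictly between them are `≤ j`. (Positions are 0-indexed.) -/
def HasBadPair (u : List ℕ) (j : ℕ) : Prop :=
  ∃ k k' : ℕ, k < k' ∧ k' < u.length ∧
    u.getD k 0 = j ∧ u.getD k' 0 = j ∧
    ∀ l : ℕ, k < l → l < k' → u.getD l 0 ≤ j

private lemma getD_take' (u : List ℕ) (m k : ℕ) (hk : k < (u.take m).length) :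
    (u.take m).getD k 0 = u.getD k 0 := by
  have h1 : k < u.length := by
    have : (u.take m).length = min m u.length := List.length_take
    omega
  rw [List.getD_eq_getElem _ _ hk, List.getD_eq_getElem _ _ h1]
  exact List.getElem_take

private lemma getD_drop' (u : List ℕ) (m k : ℕ) (hk : k < (u.drop m).length) :
    (u.drop m).getD k 0 = u.getD (m + k) 0 := by
  have h1 : m + k < u.length := by
    have : (u.drop m).length = u.length - m := List.length_drop
    omega
  rw [List.getD_eq_getElem _ _ hk, List.getD_eq_getElem _ _ h1]
  exact List.getElem_drop

theorem long_word_has_bad_pair (n : ℕ) (u : List ℕ)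
    (halpha : ∀ x ∈ u, 1 ≤ x ∧ x ≤ n) (hlen : 2 ^ n ≤ u.length) :
    ∃ j : ℕ, 1 ≤ j ∧ j ≤ n ∧ HasBadPair u j := by
  induction n generalizing u with
  | zero =>
    simp only [pow_zero] at hlen
    obtain ⟨x, hx⟩ := List.exists_mem_of_length_pos (show 0 < u.length by omega)
    have := halpha x hx
    omega
  | succ n ih =>
    by_cases h : ∃ k k', k < k' ∧ k' < u.length ∧ u.getD k 0 = n+1 ∧ u.getD k' 0 = n+1
    · obtain ⟨k, k', hkk, hk', h1, h2⟩ := h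
      refine ⟨n+1, by omega, le_refl _, k, k', hkk, hk', h1, h2, ?_⟩
      intro l hl1 hl2
      have hl : l < u.length := by omega
      have hmem : u.getD l 0 ∈ u := by
        rw [List.getD_eq_getElem _ _ hl]
        exact List.getElem_mem _
      exact (halpha _ hmem).2
    · push_neg at h
      by_cases hex : ∃ m, m < u.length ∧ u.getD m 0 = n+1
      · obtain ⟨m, hm, hmv⟩ := hex
        by_cases hcase : 2^n ≤ m
        · -- use the prefix u.take m
          have hvl : (u.take m).length = m := by
            rw [List.length_take]; omega
          have halv : ∀ x ∈ u.take m, 1 ≤ x ∧ x ≤ n := by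
            intro x hx
            have hxu : x ∈ u := List.mem_of_mem_take hx
            have h1 := halpha x hxu
            refine ⟨h1.1, ?_⟩
            by_contra hc
            have hxeq : x = n+1 := by omega
            obtain ⟨i, hi, hix⟩ := List.mem_iff_getElem.mp hx
            have hiu : u.getD i 0 = n+1 := by
              rw [← getD_take' u m i hi, List.getD_eq_getElem _ _ hi, hix, hxeq]
            exact (h i m (by omega) hm hiu) hmv
          obtain ⟨j, hj1, hj2, k, k', hkk, hk', g1, g2, g3⟩ :=
            ih (u.take m) halv (by omega)
          refine ⟨j, hj1, by omega, k, k', hkk, by omega, ?_, ?_, ?_⟩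
          · rw [← getD_take' u m k (by omega)]; exact g1
          · rw [← getD_take' u m k' (by omega)]; exact g2
          · intro l hl1 hl2
            rw [← getD_take' u m l (by omega)]
            exact g3 l hl1 hl2
        · -- use the suffix u.drop (m+1)
          have hwl : (u.drop (m+1)).length = u.length - (m+1) := List.length_drop
          have hpow : 2^(n+1) = 2^n + 2^n := by ring
          have hwlen : 2^n ≤ (u.drop (m+1)).length := by omega
          have halw : ∀ x ∈ u.drop (m+1), 1 ≤ x ∧ x ≤ n := by
            intro x hx
            have hxu : x ∈ u := List.mem_of_mem_drop hx
            have h1 := halpha x hxu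
            refine ⟨h1.1, ?_⟩
            by_contra hc
            have hxeq : x = n+1 := by omega
            obtain ⟨i, hi, hix⟩ := List.mem_iff_getElem.mp hx
            have hiu : u.getD (m+1+i) 0 = n+1 := by
              rw [← getD_drop' u (m+1) i hi, List.getD_eq_getElem _ _ hi, hix, hxeq]
            exact (h m (m+1+i) (by omega) (by omega) hmv) hiu
          obtain ⟨j, hj1, hj2, k, k', hkk, hk', g1, g2, g3⟩ :=
            ih (u.drop (m+1)) halw hwlen
          refine ⟨j, hj1, by omega, m+1+k, m+1+k', by omega, by omega, ?_, ?_, ?_⟩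
          · rw [← getD_drop' u (m+1) k (by omega)]; exact g1
          · rw [← getD_drop' u (m+1) k' (by omega)]; exact g2
          · intro l hl1 hl2
            have hleq : l = m+1+(l-(m+1)) := by omega
            rw [hleq, ← getD_drop' u (m+1) (l-(m+1)) (by omega)]
            exact g3 (l-(m+1)) (by omega) (by omega)
      · -- the letter n+1 never occurs
        push_neg at hex
        have halv : ∀ x ∈ u, 1 ≤ x ∧ x ≤ n := by
          intro x hx
          have h1 := halpha x hx
          refine ⟨h1.1, ?_⟩
          by_contra hc
          have hxeq : x = n+1 := by omega
          obtain ⟨i, hi, hix⟩ := List.mem_iff_getElem.mp hx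
          exact hex i hi (by rw [List.getD_eq_getElem _ _ hi, hix, hxeq])
        obtain ⟨j, hj1, hj2, hbad⟩ := ih u halv (by
          have : 2^n ≤ 2^(n+1) := Nat.pow_le_pow_right (by omega) (by omega)
          omega)
        exact ⟨j, hj1, by omega, hbad⟩
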